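/- For every non-positive integer −n (n ∈ ℕ), the limit of Q(z) := (sin(πz)/(2π))·(ψ(z/2) − ψ((z+1)/2)) as z → −n equals −1. -/

import Mathlib

open Complex Filter Topology

noncomputable def digamma (z : ℂ) : ℂ := deriv Complex.Gamma z / Complex.Gamma z

noncomputable def Q (z : ℂ) : ℂ :=
  Complex.sin (Real.pi * z) / (2 * Real.pi) * (_root_.digamma (z / 2) - _root_.digamma ((z + 1) / 2))

namespace QAux

lemma isOpen_good : IsOpen {z : ℂ | ∀ m : ℕ, z ≠ -(m : ℂ)} := by
  have hset : {z : ℂ | ∀ m : ℕ, z ≠ -(m : ℂ)}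
      = (Set.range ((↑) : ℤ → ℂ))ᶜ ∪ Complex.re ⁻¹' (Set.Ioi 0) := by
    ext z
    simp only [Set.mem_setOf_eq, Set.mem_union, Set.mem_compl_iff, Set.mem_range,
      Set.mem_preimage, Set.mem_Ioi]
    constructor
    · intro h
      by_cases hz : ∃ k : ℤ, (k : ℂ) = z
      · obtain ⟨k, rfl⟩ := hz
        right
        rcases lt_or_ge 0 k with hk | hk
        · simpa using (by exact_mod_cast hk : (0 : ℝ) < (k : ℝ))
        · exfalso
          apply h (-k).toNat
          have h1 : ((-k).toNat : ℤ) = -k := Int.toNat_of_nonneg (by omega)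
          have h2 : (((-k).toNat : ℕ) : ℂ) = -(k : ℂ) := by exact_mod_cast h1
          rw [h2]; ring
      · left; exact hz
    · rintro (h | h) m hm
      · exact h ⟨-m, by push_cast [hm]; ring⟩
      · rw [hm] at h
        simp only [neg_re, natCast_re] at h
        have : (0 : ℝ) ≤ (m : ℝ) := by positivity
        linarith
  rw [hset]
  exact (Complex.isClosed_range_intCast.isOpen_compl).union
    (continuous_re.isOpen_preimage _ isOpen_Ioi)

lemma analyticOnNhd_Gamma : AnalyticOnNhd ℂ Complex.Gamma {z : ℂ | ∀ m : ℕ, z ≠ -(m : ℂ)} :=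
  DifferentiableOn.analyticOnNhd
    (fun z hz => (Complex.differentiableAt_Gamma z hz).differentiableWithinAt) isOpen_good

lemma continuousAt_digamma {s : ℂ} (hs : ∀ m : ℕ, s ≠ -(m : ℂ)) : ContinuousAt _root_.digamma s := by
  have h1 : AnalyticAt ℂ (deriv Complex.Gamma) s := analyticOnNhd_Gamma.deriv s hs
  exact h1.continuousAt.div (analyticOnNhd_Gamma s hs).continuousAt (Complex.Gamma_ne_zero hs)

lemma digamma_add_one {w : ℂ} (hw : ∀ m : ℕ, w ≠ -(m : ℂ)) :
    _root_.digamma (w + 1) = _root_.digamma w + w⁻¹ := by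
  have hw0 : w ≠ 0 := by simpa using hw 0
  have hG : Complex.Gamma w ≠ 0 := Complex.Gamma_ne_zero hw
  have hd : DifferentiableAt ℂ Complex.Gamma w := Complex.differentiableAt_Gamma w hw
  have h1 : deriv (fun z => Complex.Gamma (z + 1)) w = deriv (fun z => z * Complex.Gamma z) w := by
    apply Filter.EventuallyEq.deriv_eq
    have hmem : {(0 : ℂ)}ᶜ ∈ 𝓝 w := isOpen_compl_singleton.mem_nhds (by simpa using hw0)
    filter_upwards [hmem] with z hz
    exact Complex.Gamma_add_one z hz
  have h2 : deriv (fun z => Complex.Gamma (z + 1)) w = deriv Complex.Gamma (w + 1) :=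
    deriv_comp_add_const Complex.Gamma 1 w
  have h3 : deriv (fun z => z * Complex.Gamma z) w
      = Complex.Gamma w + w * deriv Complex.Gamma w := by
    have : HasDerivAt (fun z => z * Complex.Gamma z) (1 * Complex.Gamma w + w * deriv Complex.Gamma w) w :=
      (hasDerivAt_id' w).mul hd.hasDerivAt
    simpa using this.deriv
  have hkey : deriv Complex.Gamma (w + 1) = Complex.Gamma w + w * deriv Complex.Gamma w := by
    rw [← h2, h1, h3]
  unfold _root_.digamma
  rw [hkey, Complex.Gamma_add_one w hw0]
  field_simp
  ring

lemma digamma_shift (m : ℕ) : ∀ w : ℂ, (∀ j : ℕ, w ≠ -(j : ℂ)) →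
    _root_.digamma (w + (m + 1)) = _root_.digamma w + ∑ k ∈ Finset.range (m + 1), (w + k)⁻¹ := by
  induction m with
  | zero =>
    intro w hw
    simpa using digamma_add_one hw
  | succ m ih =>
    intro w hw
    have hw1 : ∀ j : ℕ, w + 1 ≠ -(j : ℂ) := by
      intro j h
      apply hw (j + 1)
      push_cast
      linear_combination h
    have h1 := ih (w + 1) hw1
    have harg : w + ((m : ℂ) + 1 + 1) = (w + 1) + ((m : ℂ) + 1) := by ring
    have hb := digamma_add_one hw
    rw [show ((m + 1 : ℕ) : ℂ) + 1 = (m : ℂ) + 1 + 1 by push_cast; ring, harg, h1, hb,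
      Finset.sum_range_succ' (fun k => (w + (k : ℂ))⁻¹) (m + 1)]
    push_cast
    rw [Finset.sum_congr rfl (fun k _ => by rw [show w + 1 + (k : ℂ) = w + ((k : ℂ) + 1) by ring])]
    ring

lemma sin_pi_mul_add_nat (z : ℂ) (n : ℕ) :
    Complex.sin (Real.pi * (z + n)) = (-1) ^ n * Complex.sin (Real.pi * z) := by
  induction n with
  | zero => simp
  | succ n ih =>
    have harg : (Real.pi : ℂ) * (z + (n + 1 : ℕ)) = Real.pi * (z + n) + Real.pi := by
      push_cast; ring
    rw [harg, Complex.sin_add_pi, ih]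
    ring

lemma sin_pi_mul_nat (n : ℕ) : Complex.sin (Real.pi * (n : ℂ)) = 0 := by
  rw [show (Real.pi : ℂ) * (n : ℂ) = ((n : ℤ) : ℂ) * Real.pi by push_cast; ring]
  exact Complex.sin_int_mul_pi (n : ℤ)

lemma sin_pi_mul_neg_nat (n : ℕ) : Complex.sin (Real.pi * (-(n : ℂ))) = 0 := by
  rw [show (Real.pi : ℂ) * (-(n : ℂ)) = ((-n : ℤ) : ℂ) * Real.pi by push_cast; ring]
  exact Complex.sin_int_mul_pi (-n)

lemma tendsto_sin_ratio (n : ℕ) :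
    Tendsto (fun z : ℂ => Complex.sin (Real.pi * z) / (Real.pi * (z + n)))
      (𝓝[≠] (-(n : ℂ))) (𝓝 ((-1) ^ n)) := by
  have hpi : (Real.pi : ℂ) ≠ 0 := by
    exact_mod_cast Real.pi_ne_zero
  have h0 : Tendsto (fun w : ℂ => Complex.sin w / w) (𝓝[≠] (0 : ℂ)) (𝓝 1) := by
    have hs := (Complex.hasDerivAt_sin 0)
    rw [hasDerivAt_iff_tendsto_slope] at hs
    rw [Complex.cos_zero] at hs
    refine hs.congr fun x => ?_
    rw [slope_def_field]
    simp
  have hmap : Tendsto (fun z : ℂ => (Real.pi : ℂ) * (z + n)) (𝓝[≠] (-(n : ℂ)))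
      (𝓝[≠] (0 : ℂ)) := by
    rw [tendsto_nhdsWithin_iff]
    constructor
    · have hc : Continuous (fun z : ℂ => (Real.pi : ℂ) * (z + n)) := by fun_prop
      have h := (hc.tendsto (-(n : ℂ))).mono_left
        (nhdsWithin_le_nhds (s := {(-(n : ℂ))}ᶜ))
      simpa using h
    · filter_upwards [self_mem_nhdsWithin] with z hz
      have hz2 : z ≠ -(n : ℂ) := hz
      have hz' : z + (n : ℂ) ≠ 0 := fun h => hz2 (by linear_combination h)
      simp only [Set.mem_compl_iff, Set.mem_singleton_iff]
      exact mul_ne_zero hpi hz'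
  have hcomp := h0.comp hmap
  have hmul := hcomp.const_mul ((-1 : ℂ) ^ n)
  rw [mul_one] at hmul
  refine hmul.congr fun z => ?_
  simp only [Function.comp]
  rw [sin_pi_mul_add_nat z n, ← mul_div_assoc, ← mul_assoc,
    show (-1 : ℂ) ^ n * (-1 : ℂ) ^ n = 1 by rw [← mul_pow]; simp, one_mul]

lemma zero_part (n : ℕ) (b : ℂ) (hb : ∀ j : ℕ, (b - n) / 2 ≠ -(j : ℂ)) :
    Tendsto (fun z : ℂ => Complex.sin (Real.pi * z) / (2 * Real.pi) * _root_.digamma ((z + b) / 2))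
      (𝓝 (-(n : ℂ))) (𝓝 0) := by
  have h1 : ContinuousAt (fun z : ℂ => Complex.sin (Real.pi * z) / (2 * Real.pi)) (-(n : ℂ)) := by
    fun_prop
  have h2 : ContinuousAt (fun z : ℂ => _root_.digamma ((z + b) / 2)) (-(n : ℂ)) := by
    have hin : ContinuousAt (fun z : ℂ => (z + b) / 2) (-(n : ℂ)) := by fun_prop
    have hout : ContinuousAt _root_.digamma ((-(n : ℂ) + b) / 2) := by
      rw [show (-(n : ℂ) + b) / 2 = (b - n) / 2 by ring]
      exact continuousAt_digamma hb
    exact ContinuousAt.comp (g := _root_.digamma) (f := fun z : ℂ => (z + b) / 2) hout hin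
  have hval : Complex.sin (Real.pi * (-(n : ℂ))) / (2 * Real.pi)
      * _root_.digamma ((-(n : ℂ) + b) / 2) = 0 := by
    rw [sin_pi_mul_neg_nat n]
    simp
  exact hval ▸ (h1.mul h2).tendsto

lemma pole_part (n m : ℕ) (b : ℂ) (hb : b + 2 * m = (n : ℂ)) :
    Tendsto (fun z : ℂ => Complex.sin (Real.pi * z) / (2 * Real.pi) * _root_.digamma ((z + b) / 2))
      (𝓝[≠] (-(n : ℂ))) (𝓝 (-(-1 : ℂ) ^ n)) := by
  have hpi : (Real.pi : ℂ) ≠ 0 := by exact_mod_cast Real.pi_ne_zero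
  set S : ℂ → ℂ := fun z => Complex.sin (Real.pi * z) / (2 * Real.pi) with hS
  have hev : ∀ᶠ z in 𝓝[≠] (-(n : ℂ)),
      S z * _root_.digamma ((z + b) / 2)
        = S z * _root_.digamma ((z + b) / 2 + (m + 1))
          - S z * ∑ k ∈ Finset.range m, ((z + b) / 2 + k)⁻¹
          - Complex.sin (Real.pi * z) / (Real.pi * (z + n)) := by
    have hball : Metric.ball (-(n : ℂ)) 1 ∈ 𝓝[≠] (-(n : ℂ)) :=
      nhdsWithin_le_nhds (Metric.ball_mem_nhds _ one_pos)
    filter_upwards [hball, self_mem_nhdsWithin] with z hz1 hz2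
    have hzne : z ≠ -(n : ℂ) := hz2
    have hzn : z + (n : ℂ) ≠ 0 := fun h => hzne (by linear_combination h)
    have hw : ∀ j : ℕ, (z + b) / 2 ≠ -(j : ℂ) := by
      intro j hj
      have hz' : z + (n : ℂ) = 2 * ((m : ℂ) - j) := by linear_combination 2 * hj - hb
      have hdist : dist z (-(n : ℂ)) < 1 := Metric.mem_ball.mp hz1
      rw [Complex.dist_eq, sub_neg_eq_add, hz'] at hdist
      have hmj : (m : ℤ) ≠ (j : ℤ) := by
        intro h
        have hc : (m : ℂ) = (j : ℂ) := by exact_mod_cast h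
        apply hzne
        have hzz : z + (n : ℂ) = 0 := by rw [hz', hc]; ring
        linear_combination hzz
      have habs : ‖(2 * ((m : ℂ) - j))‖ = 2 * |(((m : ℤ) - (j : ℤ) : ℤ) : ℝ)| := by
        rw [norm_mul, show (m : ℂ) - (j : ℂ) = (((m : ℤ) - (j : ℤ) : ℤ) : ℂ) by push_cast; ring,
          Complex.norm_intCast]
        norm_num
      rw [habs] at hdist
      have h1 : (1 : ℤ) ≤ |(m : ℤ) - j| := by
        rcases abs_cases ((m : ℤ) - j) with ⟨he, _⟩ | ⟨he, _⟩ <;> omega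
      have h2 : (1 : ℝ) ≤ |(((m : ℤ) - (j : ℤ) : ℤ) : ℝ)| := by
        rw [← Int.cast_abs]
        exact_mod_cast h1
      linarith
    have hshift := digamma_shift m ((z + b) / 2) hw
    have hdig : _root_.digamma ((z + b) / 2)
        = _root_.digamma ((z + b) / 2 + (m + 1)) - ∑ k ∈ Finset.range (m + 1), ((z + b) / 2 + k)⁻¹ := by
      rw [hshift]; ring
    rw [hdig, Finset.sum_range_succ, mul_sub]
    have hlast : S z * ((z + b) / 2 + (m : ℂ))⁻¹
        = Complex.sin (Real.pi * z) / (Real.pi * (z + n)) := by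
      have hwm : (z + b) / 2 + (m : ℂ) = (z + n) / 2 := by linear_combination hb / 2
      rw [hS, hwm]
      field_simp
    rw [mul_add, hlast]
    ring
  refine Tendsto.congr' (hev.mono fun z hz => hz.symm) ?_
  have hT1 : Tendsto (fun z : ℂ => S z * _root_.digamma ((z + b) / 2 + (m + 1)))
      (𝓝[≠] (-(n : ℂ))) (𝓝 0) := by
    have hc1 : ContinuousAt S (-(n : ℂ)) := by rw [hS]; fun_prop
    have hc2 : ContinuousAt (fun z : ℂ => _root_.digamma ((z + b) / 2 + (m + 1))) (-(n : ℂ)) := by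
      have hin : ContinuousAt (fun z : ℂ => (z + b) / 2 + (m + 1)) (-(n : ℂ)) := by fun_prop
      have hout : ContinuousAt _root_.digamma ((-(n : ℂ) + b) / 2 + (m + 1)) := by
        rw [show (-(n : ℂ) + b) / 2 + ((m : ℂ) + 1) = 1 by linear_combination hb / 2]
        apply continuousAt_digamma
        intro j h
        have h2 : ((1 + j : ℕ) : ℂ) = ((0 : ℕ) : ℂ) := by push_cast; linear_combination h
        have h3 : 1 + j = 0 := by exact_mod_cast h2
        omega
      exact ContinuousAt.comp (g := _root_.digamma) (f := fun z : ℂ => (z + b) / 2 + (m + 1)) hout hin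
    have hval : S (-(n : ℂ)) * _root_.digamma ((-(n : ℂ) + b) / 2 + (m + 1)) = 0 := by
      rw [hS]
      simp only []
      rw [sin_pi_mul_neg_nat n]
      simp
    exact hval ▸ ((hc1.mul hc2).tendsto.mono_left nhdsWithin_le_nhds)
  have hT2 : Tendsto (fun z : ℂ => S z * ∑ k ∈ Finset.range m, ((z + b) / 2 + k)⁻¹)
      (𝓝[≠] (-(n : ℂ))) (𝓝 0) := by
    have hc1 : ContinuousAt S (-(n : ℂ)) := by rw [hS]; fun_prop
    have hc2 : ContinuousAt (fun z : ℂ => ∑ k ∈ Finset.range m, ((z + b) / 2 + k)⁻¹)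
        (-(n : ℂ)) := by
      apply tendsto_finset_sum
      intro k hk
      have hk' : k < m := Finset.mem_range.mp hk
      apply ContinuousAt.inv₀ (by fun_prop)
      intro h
      have hc : (m : ℂ) = (k : ℂ) := by linear_combination hb / 2 - h
      have : (m : ℕ) = k := by exact_mod_cast hc
      omega
    have hval : S (-(n : ℂ)) * (∑ k ∈ Finset.range m, ((-(n : ℂ) + b) / 2 + k)⁻¹) = 0 := by
      rw [hS]
      simp only []
      rw [sin_pi_mul_neg_nat n]
      simp
    exact hval ▸ ((hc1.mul hc2).tendsto.mono_left nhdsWithin_le_nhds)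
  have hT3 := tendsto_sin_ratio n
  have := (hT1.sub hT2).sub hT3
  simpa using this

end QAux

theorem Q_limit_neg_one (n : ℕ) :
    Tendsto Q (𝓝[≠] (-(n : ℂ))) (𝓝 (-1)) := by
  have hQ : ∀ z : ℂ, Q z
      = Complex.sin (Real.pi * z) / (2 * Real.pi) * _root_.digamma ((z + 0) / 2)
        - Complex.sin (Real.pi * z) / (2 * Real.pi) * _root_.digamma ((z + 1) / 2) := by
    intro z
    rw [Q, mul_sub, add_zero]
  rcases Nat.even_or_odd n with ⟨m, hm⟩ | ⟨m, hm⟩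
  · -- n = m + m, pole at z/2
    have hpole := QAux.pole_part n m 0 (by push_cast [hm]; ring)
    have hzero : Tendsto (fun z : ℂ => Complex.sin (Real.pi * z) / (2 * Real.pi)
        * _root_.digamma ((z + 1) / 2)) (𝓝[≠] (-(n : ℂ))) (𝓝 0) :=
      (QAux.zero_part n 1 ?_).mono_left nhdsWithin_le_nhds
    · have htot := hpole.sub hzero
      rw [sub_zero] at htot
      have hval : -(-1 : ℂ) ^ n = -1 := by
        rw [(Even.neg_one_pow ⟨m, hm⟩ : (-1 : ℂ) ^ n = 1)]
      rw [hval] at htot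
      exact htot.congr fun z => (hQ z).symm
    · intro j h
      have h2 : ((1 + 2 * j : ℕ) : ℂ) = ((n : ℕ) : ℂ) := by push_cast; linear_combination 2 * h
      have h3 : 1 + 2 * j = n := by exact_mod_cast h2
      omega
  · -- n = 2m+1, pole at (z+1)/2
    have hpole := QAux.pole_part n m 1 (by push_cast [hm]; ring)
    have hzero : Tendsto (fun z : ℂ => Complex.sin (Real.pi * z) / (2 * Real.pi)
        * _root_.digamma ((z + 0) / 2)) (𝓝[≠] (-(n : ℂ))) (𝓝 0) :=
      (QAux.zero_part n 0 ?_).mono_left nhdsWithin_le_nhds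
    · have htot := hzero.sub hpole
      rw [zero_sub, neg_neg] at htot
      have hval : (-1 : ℂ) ^ n = -1 := Odd.neg_one_pow ⟨m, hm⟩
      rw [hval] at htot
      exact htot.congr fun z => (hQ z).symm
    · intro j h
      have h2 : ((n : ℕ) : ℂ) = ((2 * j : ℕ) : ℂ) := by push_cast; linear_combination -2 * h
      have h3 : n = 2 * j := by exact_mod_cast h2
      omega
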